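/- Let R be a unital (not necessarily commutative) ring and ψ₁, ψ₂, ψ₃, ψ₄, G₁, Δ ∈ R. Suppose a := ψ₃*G₁ + ψ₄ is a unit and b := ψ₄ − Δ*ψ₂ is a unit. Define M := (ψ₁*G₁ + ψ₂)*a⁻¹ and G₂ := −b⁻¹*(ψ₃ − Δ*ψ₁). Then (1 − Δ*M)*a = b*(1 − G₂*G₁); consequently, 1 − Δ*M is a unit if and only if 1 − G₂*G₁ is a unit. -/
import Mathlib

/-- Chain-scattering identity: with `a = ψ₃G₁ + ψ₄` and `b = ψ₄ − Δψ₂` units,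
`M = (ψ₁G₁ + ψ₂)a⁻¹` and `G₂ = −b⁻¹(ψ₃ − Δψ₁)`, one has
`(1 − ΔM)a = b(1 − G₂G₁)`; hence `1 − ΔM` is a unit iff `1 − G₂G₁` is. -/
theorem chain_scattering_identity
    {R : Type*} [Ring R] (ψ₁ ψ₂ ψ₃ ψ₄ G₁ Δ : R)
    (ha : IsUnit (ψ₃ * G₁ + ψ₄)) (hb : IsUnit (ψ₄ - Δ * ψ₂)) :
    (1 - Δ * ((ψ₁ * G₁ + ψ₂) * Ring.inverse (ψ₃ * G₁ + ψ₄))) * (ψ₃ * G₁ + ψ₄) =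
      (ψ₄ - Δ * ψ₂) *
        (1 - (-(Ring.inverse (ψ₄ - Δ * ψ₂) * (ψ₃ - Δ * ψ₁))) * G₁) ∧
    (IsUnit (1 - Δ * ((ψ₁ * G₁ + ψ₂) * Ring.inverse (ψ₃ * G₁ + ψ₄))) ↔
      IsUnit (1 - (-(Ring.inverse (ψ₄ - Δ * ψ₂) * (ψ₃ - Δ * ψ₁))) * G₁)) := by
  have h1 : Ring.inverse (ψ₃ * G₁ + ψ₄) * (ψ₃ * G₁ + ψ₄) = 1 :=
    Ring.inverse_mul_cancel _ ha
  have h2 : (ψ₄ - Δ * ψ₂) * Ring.inverse (ψ₄ - Δ * ψ₂) = 1 :=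
    Ring.mul_inverse_cancel _ hb
  have key : (1 - Δ * ((ψ₁ * G₁ + ψ₂) * Ring.inverse (ψ₃ * G₁ + ψ₄))) * (ψ₃ * G₁ + ψ₄) =
      (ψ₄ - Δ * ψ₂) *
        (1 - (-(Ring.inverse (ψ₄ - Δ * ψ₂) * (ψ₃ - Δ * ψ₁))) * G₁) := by
    have lhs : (1 - Δ * ((ψ₁ * G₁ + ψ₂) * Ring.inverse (ψ₃ * G₁ + ψ₄))) * (ψ₃ * G₁ + ψ₄) =
        (ψ₃ * G₁ + ψ₄) - Δ * (ψ₁ * G₁ + ψ₂) := by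
      have : Δ * ((ψ₁ * G₁ + ψ₂) * Ring.inverse (ψ₃ * G₁ + ψ₄)) * (ψ₃ * G₁ + ψ₄)
          = Δ * (ψ₁ * G₁ + ψ₂) * (Ring.inverse (ψ₃ * G₁ + ψ₄) * (ψ₃ * G₁ + ψ₄)) := by
        noncomm_ring
      rw [sub_mul, one_mul, this, h1, mul_one]
    have rhs : (ψ₄ - Δ * ψ₂) *
        (1 - (-(Ring.inverse (ψ₄ - Δ * ψ₂) * (ψ₃ - Δ * ψ₁))) * G₁) =
        (ψ₄ - Δ * ψ₂) + (ψ₃ - Δ * ψ₁) * G₁ := by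
      have : (ψ₄ - Δ * ψ₂) *
          (1 - (-(Ring.inverse (ψ₄ - Δ * ψ₂) * (ψ₃ - Δ * ψ₁))) * G₁) =
          (ψ₄ - Δ * ψ₂) + ((ψ₄ - Δ * ψ₂) * Ring.inverse (ψ₄ - Δ * ψ₂)) * ((ψ₃ - Δ * ψ₁) * G₁) := by
        noncomm_ring
      rw [this, h2, one_mul]
    rw [lhs, rhs]; noncomm_ring
  refine ⟨key, ?_⟩
  calc IsUnit (1 - Δ * ((ψ₁ * G₁ + ψ₂) * Ring.inverse (ψ₃ * G₁ + ψ₄)))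
      ↔ IsUnit ((1 - Δ * ((ψ₁ * G₁ + ψ₂) * Ring.inverse (ψ₃ * G₁ + ψ₄))) * (ψ₃ * G₁ + ψ₄)) := by
        rw [show ψ₃ * G₁ + ψ₄ = (ha.unit : R) from rfl, Units.isUnit_mul_units]
    _ ↔ IsUnit (1 - (-(Ring.inverse (ψ₄ - Δ * ψ₂) * (ψ₃ - Δ * ψ₁))) * G₁) := by
        rw [key, show ψ₄ - Δ * ψ₂ = (hb.unit : R) from rfl, Units.isUnit_units_mul]
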